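/- Let μ_T, μ_W ∈ ℝ^d be i.i.d. N(0, τ²·I_d), let x = μ_T + ξ with ξ ~ N(0, σ²·I_d) independent, and let ρ = (1+2τ²/σ²)/(1+τ²/σ²)². Then for any ε₀ > 0, if d > 4·log(1/ε₀)/log(1/ρ), then Pr(‖x − μ_W‖² ≤ ‖x − μ_T‖²) ≤ ε₀. -/

import Mathlib

open MeasureTheory ProbabilityTheory Real
open scoped ENNReal NNReal

section aux

lemma integrable_exp_quad (p q : ℝ) (hp : 0 < p) :
    Integrable (fun z : ℝ => Real.exp (-p*z^2 + q*z)) := by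
  have h : ∀ z : ℝ, -p*z^2 + q*z = -p*(z - q/(2*p))^2 + q^2/(4*p) := by
    intro z; field_simp; ring
  simp_rw [h, Real.exp_add]
  exact (((integrable_exp_neg_mul_sq hp).comp_sub_right (q/(2*p))).mul_const _)

lemma integral_exp_quad (p q : ℝ) (hp : 0 < p) :
    ∫ z : ℝ, Real.exp (-p*z^2 + q*z) = Real.sqrt (π/p) * Real.exp (q^2/(4*p)) := by
  have h : ∀ z : ℝ, -p*z^2 + q*z = -p*(z - q/(2*p))^2 + q^2/(4*p) := by
    intro z; field_simp; ring
  simp_rw [h, Real.exp_add]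
  rw [MeasureTheory.integral_mul_const,
    integral_sub_right_eq_self (fun z : ℝ => Real.exp (-p*z^2)) (q/(2*p)),
    integral_gaussian]

variable {v α β : ℝ}

lemma gauss_density_eq (hv : 0 < v) (α β : ℝ) (z : ℝ) :
    gaussianPDFReal 0 v.toNNReal z * Real.exp (α*z^2 + β*z)
      = (Real.sqrt (2*π*v))⁻¹ * Real.exp (-(1/(2*v) - α)*z^2 + β*z) := by
  rw [gaussianPDFReal]
  rw [Real.coe_toNNReal _ hv.le]
  rw [mul_assoc, ← Real.exp_add]
  congr 2
  field_simp
  ring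

lemma integrable_exp_quad_gauss (hv : 0 < v) (hα : 2*v*α < 1) :
    Integrable (fun z => Real.exp (α*z^2 + β*z)) (gaussianReal 0 v.toNNReal) := by
  have hv' : v.toNNReal ≠ 0 := by simp [hv, hv.le]
  have hp : 0 < 1/(2*v) - α := by
    rw [sub_pos, lt_div_iff₀ (by linarith)]; linarith
  rw [gaussianReal_of_var_ne_zero _ hv', gaussianPDF_def]
  have : (fun x => ENNReal.ofReal (gaussianPDFReal 0 v.toNNReal x))
      = (fun x => ((gaussianPDFReal 0 v.toNNReal x).toNNReal : ℝ≥0∞)) := rfl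
  rw [this, integrable_withDensity_iff_integrable_smul
    ((measurable_gaussianPDFReal 0 v.toNNReal).real_toNNReal)]
  have heq : (fun z => ((gaussianPDFReal 0 v.toNNReal z).toNNReal : ℝ≥0)
        • Real.exp (α*z^2 + β*z))
      = fun z => (Real.sqrt (2*π*v))⁻¹ * Real.exp (-(1/(2*v) - α)*z^2 + β*z) := by
    funext z
    rw [NNReal.smul_def, smul_eq_mul, Real.coe_toNNReal _ (gaussianPDFReal_nonneg _ _ _)]
    exact gauss_density_eq hv α β z
  rw [heq]
  exact (integrable_exp_quad _ β hp).const_mul _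

lemma integral_exp_quad_gauss (hv : 0 < v) (hα : 2*v*α < 1) :
    ∫ z, Real.exp (α*z^2 + β*z) ∂(gaussianReal 0 v.toNNReal)
      = Real.exp (v*β^2/(2*(1-2*v*α))) / Real.sqrt (1-2*v*α) := by
  have hv' : v.toNNReal ≠ 0 := by simp [hv, hv.le]
  have hp : 0 < 1/(2*v) - α := by
    rw [sub_pos, lt_div_iff₀ (by linarith)]; linarith
  set p := 1/(2*v) - α with hpdef
  rw [gaussianReal_of_var_ne_zero _ hv', gaussianPDF_def]
  have : (fun x => ENNReal.ofReal (gaussianPDFReal 0 v.toNNReal x))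
      = (fun x => ((gaussianPDFReal 0 v.toNNReal x).toNNReal : ℝ≥0∞)) := rfl
  rw [this, integral_withDensity_eq_integral_smul
    ((measurable_gaussianPDFReal 0 v.toNNReal).real_toNNReal)]
  have heq : (fun z => ((gaussianPDFReal 0 v.toNNReal z).toNNReal : ℝ≥0)
        • Real.exp (α*z^2 + β*z))
      = fun z => (Real.sqrt (2*π*v))⁻¹ * Real.exp (-p*z^2 + β*z) := by
    funext z
    rw [NNReal.smul_def, smul_eq_mul, Real.coe_toNNReal _ (gaussianPDFReal_nonneg _ _ _)]
    exact gauss_density_eq hv α β z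
  rw [heq, MeasureTheory.integral_const_mul, integral_exp_quad _ _ hp]
  have h2vp : 2*v*p = 1 - 2*v*α := by rw [hpdef]; field_simp
  have hπv : (0:ℝ) < 2*π*v := by positivity
  have h1 : (Real.sqrt (2*π*v))⁻¹ * Real.sqrt (π/p) = (Real.sqrt (1-2*v*α))⁻¹ := by
    rw [← Real.sqrt_inv, ← Real.sqrt_mul (by positivity), ← Real.sqrt_inv]
    congr 1
    rw [← h2vp]; field_simp
  have h2 : β^2/(4*p) = v*β^2/(2*(1-2*v*α)) := by
    rw [← h2vp]; field_simp; ring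
  rw [← mul_assoc, h1, h2]; ring

lemma lintegral_exp_quad_gauss (hv : 0 < v) (hα : 2*v*α < 1) :
    ∫⁻ z, ENNReal.ofReal (Real.exp (α*z^2 + β*z)) ∂(gaussianReal 0 v.toNNReal)
      = ENNReal.ofReal (Real.exp (v*β^2/(2*(1-2*v*α))) / Real.sqrt (1-2*v*α)) := by
  rw [← ofReal_integral_eq_lintegral_ofReal (integrable_exp_quad_gauss hv hα)
    (ae_of_all _ fun z => (Real.exp_pos _).le), integral_exp_quad_gauss hv hα]

lemma lintegral_pi_prod {n : ℕ} {E : Fin n → Type*} [∀ i, MeasurableSpace (E i)]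
    (μ : ∀ i, Measure (E i)) [∀ i, SigmaFinite (μ i)]
    (f : ∀ i, E i → ℝ≥0∞) (hf : ∀ i, Measurable (f i)) :
    ∫⁻ x : (i : Fin n) → E i, ∏ i, f i (x i) ∂Measure.pi μ = ∏ i, ∫⁻ x, f i x ∂μ i := by
  induction n with
  | zero => simp
  | succ n ih =>
    calc
      _ = ∫⁻ x : E 0 × ((i : Fin n) → E (Fin.succ i)),
          f 0 x.1 * ∏ i : Fin n, f (Fin.succ i) (x.2 i)
          ∂((μ 0).prod (Measure.pi fun i => μ (Fin.succ i))) := by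
        rw [← ((measurePreserving_piFinSuccAbove μ 0).symm).lintegral_comp
          (f := fun x => ∏ i, f i (x i))
          (Finset.measurable_prod _ (fun i _ => (hf i).comp (measurable_pi_apply i)))]
        congr 1
        funext x
        simp_rw [MeasurableEquiv.piFinSuccAbove_symm_apply, Fin.insertNthEquiv,
          Fin.prod_univ_succ, Fin.insertNth_zero, Equiv.coe_fn_mk, Fin.cons_succ,
          ]
        rfl
      _ = (∫⁻ x, f 0 x ∂μ 0) * ∏ i : Fin n, ∫⁻ x, f (Fin.succ i) x ∂μ (Fin.succ i) := by
        rw [lintegral_prod_mul (f := fun a => f 0 a)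
          (g := fun y : ((i : Fin n) → E (Fin.succ i)) => ∏ i : Fin n, f (Fin.succ i) (y i)) (hf 0).aemeasurable
          (Finset.measurable_prod _ (fun i _ => (hf i.succ).comp (measurable_pi_apply i))).aemeasurable]
        rw [ih _ _ (fun i => hf i.succ)]
      _ = _ := by rw [Fin.prod_univ_succ]

lemma iIndepFun_ae_congr {Ω ι : Type*} [MeasurableSpace Ω] {μ : Measure Ω} [Countable ι]
    {β : ι → Type*} [m : ∀ i, MeasurableSpace (β i)] {f g : ∀ i, Ω → β i}
    (h : ∀ i, f i =ᵐ[μ] g i) (hf : iIndepFun f μ) : iIndepFun g μ := by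
  rw [iIndepFun_iff_measure_inter_preimage_eq_mul] at hf ⊢
  intro S sets hsets
  have hae : ∀ᵐ ω ∂μ, ∀ i, f i ω = g i ω := ae_all_iff.2 h
  have h1 : (⋂ i ∈ S, g i ⁻¹' sets i) =ᵐ[μ] (⋂ i ∈ S, f i ⁻¹' sets i) := by
    filter_upwards [hae] with ω hω
    have : (ω ∈ ⋂ i ∈ S, g i ⁻¹' sets i) ↔ (ω ∈ ⋂ i ∈ S, f i ⁻¹' sets i) := by
      simp only [Set.mem_iInter, Set.mem_preimage, hω]
    exact eq_iff_iff.2 this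
  rw [measure_congr h1, hf S hsets]
  refine Finset.prod_congr rfl fun i _ => measure_congr ?_
  filter_upwards [h i] with ω hω
  exact congrArg (fun z => z ∈ sets i) hω

variable {τ σ : ℝ}

lemma step_c (hσ : 0 < σ) (w : ℝ) :
    ∫⁻ z, ENNReal.ofReal (Real.exp (-(4*σ^2)⁻¹ * (w^2 + 2*w*z)))
        ∂(gaussianReal 0 (σ^2).toNNReal)
      = ENNReal.ofReal (Real.exp (-(8*σ^2)⁻¹ * w^2)) := by
  have hσ2 : (0:ℝ) < σ^2 := by positivity
  have h : ∀ z : ℝ, -(4*σ^2)⁻¹ * (w^2 + 2*w*z)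
      = (-(4*σ^2)⁻¹ * w^2) + ((0:ℝ)*z^2 + (-(2*σ^2)⁻¹*w)*z) := by
    intro z; field_simp; ring
  simp only [h]
  have h2 : (fun z : ℝ => ENNReal.ofReal (Real.exp ((-(4*σ^2)⁻¹ * w^2) + ((0:ℝ)*z^2 + (-(2*σ^2)⁻¹*w)*z))))
      = fun z : ℝ => ENNReal.ofReal (Real.exp (-(4*σ^2)⁻¹ * w^2)) *
          ENNReal.ofReal (Real.exp ((0:ℝ)*z^2 + (-(2*σ^2)⁻¹*w)*z)) := by
    funext z; rw [Real.exp_add, ENNReal.ofReal_mul (Real.exp_pos _).le]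
  rw [h2, lintegral_const_mul' _ _ ENNReal.ofReal_ne_top,
    lintegral_exp_quad_gauss hσ2 (by simp),
    ← ENNReal.ofReal_mul (Real.exp_pos _).le]
  congr 1
  rw [mul_zero, sub_zero, Real.sqrt_one, div_one, ← Real.exp_add]
  congr 1
  field_simp
  ring

lemma step_b (hτ : 0 < τ) (hσ : 0 < σ) (a : ℝ) :
    ∫⁻ b, ENNReal.ofReal (Real.exp (-(8*σ^2)⁻¹ * (a-b)^2))
        ∂(gaussianReal 0 (τ^2).toNNReal)
      = ENNReal.ofReal (Real.exp (-((8*σ^2)⁻¹/(1+τ^2/(4*σ^2))) * a^2)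
          / Real.sqrt (1+τ^2/(4*σ^2))) := by
  have hσ2 : (0:ℝ) < σ^2 := by positivity
  have hτ2 : (0:ℝ) < τ^2 := by positivity
  have hu0 : (0:ℝ) < 1+τ^2/(4*σ^2) := by positivity
  have h : ∀ b : ℝ, -(8*σ^2)⁻¹ * (a-b)^2
      = (-(8*σ^2)⁻¹ * a^2) + ((-(8*σ^2)⁻¹)*b^2 + (2*(8*σ^2)⁻¹*a)*b) := by
    intro b; field_simp; ring
  simp only [h]
  have h2 : (fun b : ℝ => ENNReal.ofReal (Real.exp ((-(8*σ^2)⁻¹ * a^2)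
        + ((-(8*σ^2)⁻¹)*b^2 + (2*(8*σ^2)⁻¹*a)*b))))
      = fun b : ℝ => ENNReal.ofReal (Real.exp (-(8*σ^2)⁻¹ * a^2)) *
          ENNReal.ofReal (Real.exp ((-(8*σ^2)⁻¹)*b^2 + (2*(8*σ^2)⁻¹*a)*b)) := by
    funext b; rw [Real.exp_add, ENNReal.ofReal_mul (Real.exp_pos _).le]
  rw [h2, lintegral_const_mul' _ _ ENNReal.ofReal_ne_top,
    lintegral_exp_quad_gauss hτ2 (by nlinarith [mul_pos hτ2 (by positivity : (0:ℝ) < (8*σ^2)⁻¹)]),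
    ← ENNReal.ofReal_mul (Real.exp_pos _).le]
  congr 1
  have hu : 1-2*τ^2*(-(8*σ^2)⁻¹) = 1+τ^2/(4*σ^2) := by field_simp; ring
  rw [hu, ← mul_div_assoc, ← Real.exp_add]
  congr 2
  field_simp
  ring

lemma step_a (hτ : 0 < τ) (hσ : 0 < σ) :
    ∫⁻ a, ENNReal.ofReal (Real.exp (-((8*σ^2)⁻¹/(1+τ^2/(4*σ^2))) * a^2)
          / Real.sqrt (1+τ^2/(4*σ^2)))
        ∂(gaussianReal 0 (τ^2).toNNReal)
      = ENNReal.ofReal (Real.sqrt (1+τ^2/(2*σ^2)))⁻¹ := by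
  have hσ2 : (0:ℝ) < σ^2 := by positivity
  have hτ2 : (0:ℝ) < τ^2 := by positivity
  have hu0 : (0:ℝ) < 1+τ^2/(4*σ^2) := by positivity
  have h : (fun a : ℝ => ENNReal.ofReal (Real.exp (-((8*σ^2)⁻¹/(1+τ^2/(4*σ^2))) * a^2)
        / Real.sqrt (1+τ^2/(4*σ^2))))
      = fun a : ℝ => ENNReal.ofReal (Real.exp ((-((8*σ^2)⁻¹/(1+τ^2/(4*σ^2)))) * a^2 + 0*a)) *
          ENNReal.ofReal (Real.sqrt (1+τ^2/(4*σ^2)))⁻¹ := by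
    funext a
    rw [div_eq_mul_inv, ENNReal.ofReal_mul (Real.exp_pos _).le, zero_mul, add_zero]
  rw [h, lintegral_mul_const' _ _ ENNReal.ofReal_ne_top,
    lintegral_exp_quad_gauss hτ2
      (by nlinarith [mul_pos hτ2 (by positivity : (0:ℝ) < (8*σ^2)⁻¹/(1+τ^2/(4*σ^2)))]),
    ← ENNReal.ofReal_mul (by positivity)]
  congr 1
  have h0 : (0:ℝ)^2 = 0 := by norm_num
  rw [show τ^2*(0:ℝ)^2/(2*(1-2*τ^2*(-((8*σ^2)⁻¹/(1+τ^2/(4*σ^2)))))) = 0 by rw [h0]; ring,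
    Real.exp_zero]
  rw [one_div, ← mul_inv]
  have hpos : (0:ℝ) ≤ 1 - 2*τ^2*(-((8*σ^2)⁻¹/(1+τ^2/(4*σ^2)))) := by
    nlinarith [mul_pos hτ2 (div_pos (by positivity : (0:ℝ)<(8*σ^2)⁻¹) hu0)]
  rw [← Real.sqrt_mul hpos]
  congr 2
  field_simp
  ring

lemma final_num (d : ℕ) (τ σ ε₀ : ℝ) (hτ : 0 < τ) (hσ : 0 < σ) (hε₀ : 0 < ε₀)
    (hd : (d : ℝ) >
      4 * Real.log (1 / ε₀) /
        Real.log (1 / ((1 + 2 * τ ^ 2 / σ ^ 2) / (1 + τ ^ 2 / σ ^ 2) ^ 2))) :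
    ((Real.sqrt (1 + τ^2/(2*σ^2)))⁻¹)^d ≤ ε₀ := by
  set ρ : ℝ := (1 + 2 * τ ^ 2 / σ ^ 2) / (1 + τ ^ 2 / σ ^ 2) ^ 2 with hρdef
  have hσ2 : (0:ℝ) < σ^2 := by positivity
  have hτ2 : (0:ℝ) < τ^2 := by positivity
  have hρ0 : 0 < ρ := by positivity
  have hρ1 : ρ < 1 := by
    rw [hρdef, div_lt_one (by positivity)]
    have h : (1 + τ ^ 2 / σ ^ 2)^2 - (1 + 2 * τ ^ 2 / σ ^ 2) = (τ^2/σ^2)^2 := by ring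
    nlinarith [sq_nonneg (τ^2/σ^2), div_pos hτ2 hσ2]
  have hL : 0 < Real.log (1/ρ) := Real.log_pos (one_lt_one_div hρ0 hρ1)
  have hd' : 4 * Real.log (1/ε₀) < d * Real.log (1/ρ) := by
    rw [gt_iff_lt, div_lt_iff₀ hL] at hd; linarith
  set x : ℝ := 1 + τ^2/(2*σ^2) with hxdef
  have hx1 : 1 < x := by rw [hxdef]; nlinarith [div_pos hτ2 (by positivity : (0:ℝ) < 2*σ^2)]
  have hx0 : 0 < x := by linarith
  have hKd : ((Real.sqrt x)⁻¹)^d = x ^ (-((d:ℝ)/2)) := by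
    rw [Real.sqrt_eq_rpow, ← Real.rpow_neg_one (x ^ ((1:ℝ)/2)), ← Real.rpow_natCast
      ((x ^ ((1:ℝ)/2)) ^ (-1:ℝ)) d, ← Real.rpow_mul hx0.le, ← Real.rpow_mul hx0.le]
    congr 1; ring
  have hstep1 : x ^ (-((d:ℝ)/2)) ≤ ρ ^ ((d:ℝ)/4) := by
    have h1 : x ^ (-((d:ℝ)/2)) = (x ^ (-(2:ℝ))) ^ ((d:ℝ)/4) := by
      rw [← Real.rpow_mul hx0.le]; norm_num; ring_nf
    rw [h1]
    apply Real.rpow_le_rpow (Real.rpow_nonneg hx0.le _) _ (by positivity)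
    have h2 : x ^ (-(2:ℝ)) = (x^2)⁻¹ := by
      rw [Real.rpow_neg hx0.le, Real.rpow_two]
    rw [h2, hρdef, inv_eq_one_div, div_le_div_iff₀ (by positivity) (by positivity), hxdef]
    field_simp
    nlinarith [mul_pos (mul_pos (mul_pos hσ2 hσ2) (mul_pos hσ2 hσ2)) hτ2,
      mul_pos (mul_pos (mul_pos hσ2 hσ2) hσ2) (mul_pos hτ2 hτ2),
      mul_pos (mul_pos hσ2 hσ2) (mul_pos hτ2 (mul_pos hτ2 hτ2)),
      mul_pos hσ2 hτ2, mul_pos hτ2 hτ2, mul_pos (mul_pos hσ2 hσ2) hτ2,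
      mul_pos hσ2 (mul_pos hτ2 hτ2), mul_pos hτ2 (mul_pos hτ2 hτ2)]
  have hstep2 : ρ ^ ((d:ℝ)/4) < ε₀ := by
    rw [Real.rpow_def_of_pos hρ0, ← Real.exp_log hε₀]
    apply Real.exp_lt_exp.2
    have hlρ : Real.log (1/ρ) = - Real.log ρ := by rw [one_div, Real.log_inv]
    have hlε : Real.log (1/ε₀) = - Real.log ε₀ := by rw [one_div, Real.log_inv]
    rw [hlρ, hlε] at hd'
    nlinarith
  calc ((Real.sqrt x)⁻¹)^d = x ^ (-((d:ℝ)/2)) := hKd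
    _ ≤ ρ ^ ((d:ℝ)/4) := hstep1
    _ ≤ ε₀ := hstep2.le

end aux

theorem stmt_7 {Ω : Type*} [MeasurableSpace Ω] (P : Measure Ω) [IsProbabilityMeasure P]
    (d : ℕ) (τ σ : ℝ) (hτ : 0 < τ) (hσ : 0 < σ)
    (μT μW ξ : Ω → (Fin d → ℝ))
    (hμT : Measure.map μT P = Measure.pi fun _ => gaussianReal 0 (τ ^ 2).toNNReal)
    (hμW : Measure.map μW P = Measure.pi fun _ => gaussianReal 0 (τ ^ 2).toNNReal)
    (hξ : Measure.map ξ P = Measure.pi fun _ => gaussianReal 0 (σ ^ 2).toNNReal)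
    (hindep : iIndepFun ![μT, μW, ξ] P)
    (x : Ω → Fin d → ℝ) (hx : ∀ ω i, x ω i = μT ω i + ξ ω i)
    (ε₀ : ℝ) (hε₀ : 0 < ε₀)
    (hd : (d : ℝ) >
      4 * Real.log (1 / ε₀) /
        Real.log (1 / ((1 + 2 * τ ^ 2 / σ ^ 2) / (1 + τ ^ 2 / σ ^ 2) ^ 2))) :
    (P {ω | ∑ i, (x ω i - μW ω i) ^ 2 ≤ ∑ i, (x ω i - μT ω i) ^ 2}).toReal ≤ ε₀ := by
  have hσ2 : (0:ℝ) < σ^2 := by positivity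
  -- a.e.-measurability of the three random vectors
  have hμTae : AEMeasurable μT P := by
    by_contra hc
    rw [Measure.map_of_not_aemeasurable hc] at hμT
    exact (IsProbabilityMeasure.ne_zero _) hμT.symm
  have hμWae : AEMeasurable μW P := by
    by_contra hc
    rw [Measure.map_of_not_aemeasurable hc] at hμW
    exact (IsProbabilityMeasure.ne_zero _) hμW.symm
  have hξae : AEMeasurable ξ P := by
    by_contra hc
    rw [Measure.map_of_not_aemeasurable hc] at hξ
    exact (IsProbabilityMeasure.ne_zero _) hξ.symm
  -- measurable modifications
  set A := hμTae.mk μT with hAdef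
  set B := hμWae.mk μW with hBdef
  set C := hξae.mk ξ with hCdef
  have hA : Measurable A := hμTae.measurable_mk
  have hB : Measurable B := hμWae.measurable_mk
  have hC : Measurable C := hξae.measurable_mk
  have haeA : μT =ᵐ[P] A := hμTae.ae_eq_mk
  have haeB : μW =ᵐ[P] B := hμWae.ae_eq_mk
  have haeC : ξ =ᵐ[P] C := hξae.ae_eq_mk
  have hmapA : Measure.map A P = Measure.pi fun _ => gaussianReal 0 (τ ^ 2).toNNReal :=
    (Measure.map_congr haeA).symm.trans hμT
  have hmapB : Measure.map B P = Measure.pi fun _ => gaussianReal 0 (τ ^ 2).toNNReal :=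
    (Measure.map_congr haeB).symm.trans hμW
  have hmapC : Measure.map C P = Measure.pi fun _ => gaussianReal 0 (σ ^ 2).toNNReal :=
    (Measure.map_congr haeC).symm.trans hξ
  have hindep' : iIndepFun ![A, B, C] P := by
    refine iIndepFun_ae_congr (fun i => ?_) hindep
    fin_cases i
    · exact haeA
    · exact haeB
    · exact haeC
  have hmeas3 : ∀ i : Fin 3, Measurable (![A, B, C] i) := by
    intro i; fin_cases i
    · exact hA
    · exact hB
    · exact hC
  -- independence structure
  have hBCindep : IndepFun B C P := by
    have := hindep'.indepFun (show (1:Fin 3) ≠ 2 by decide)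
    simpa using this
  have hA_BC : IndepFun A (fun ω => (B ω, C ω)) P := by
    have := hindep'.indepFun_prodMk hmeas3 1 2 0 (by decide) (by decide)
    simpa using this.symm
  have hmapBC : Measure.map (fun ω => (B ω, C ω)) P
      = (Measure.pi fun _ : Fin d => gaussianReal 0 (τ ^ 2).toNNReal).prod
        (Measure.pi fun _ : Fin d => gaussianReal 0 (σ ^ 2).toNNReal) := by
    rw [(indepFun_iff_map_prod_eq_prod_map_map hB.aemeasurable hC.aemeasurable).1 hBCindep,
      hmapB, hmapC]
  have hmapT : Measure.map (fun ω => (A ω, (B ω, C ω))) P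
      = (Measure.pi fun _ : Fin d => gaussianReal 0 (τ ^ 2).toNNReal).prod
        (((Measure.pi fun _ : Fin d => gaussianReal 0 (τ ^ 2).toNNReal)).prod
          (Measure.pi fun _ : Fin d => gaussianReal 0 (σ ^ 2).toNNReal)) := by
    rw [(indepFun_iff_map_prod_eq_prod_map_map hA.aemeasurable
      (hB.prodMk hC).aemeasurable).1 hA_BC, hmapA, hmapBC]
  -- the Chernoff random variable
  set Sf : Ω → ℝ :=
    fun ω => ∑ i, ((A ω i - B ω i)^2 + 2*(A ω i - B ω i)*(C ω i)) with hSfdef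
  have hSfmeas : Measurable Sf := by
    apply Finset.measurable_sum
    intro i _
    fun_prop
  -- the per-coordinate kernel on the product space
  set G : (Fin d → ℝ) × ((Fin d → ℝ) × (Fin d → ℝ)) → ℝ≥0∞ :=
    fun y => ∏ i, ENNReal.ofReal (Real.exp (-(4*σ^2)⁻¹ *
      ((y.1 i - y.2.1 i)^2 + 2*(y.1 i - y.2.1 i)*(y.2.2 i)))) with hGdef
  have hGmeas : Measurable G := by
    apply Finset.measurable_prod
    intro i _
    apply Measurable.ennreal_ofReal
    fun_prop
  have hg : ∀ ω, ENNReal.ofReal (Real.exp (-(4*σ^2)⁻¹ * Sf ω)) = G (A ω, (B ω, C ω)) := by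
    intro ω
    rw [hSfdef, hGdef, Finset.mul_sum, Real.exp_sum,
      ENNReal.ofReal_prod_of_nonneg (fun i _ => (Real.exp_pos _).le)]
  -- key computation of the exponential moment
  have key : ∫⁻ ω, ENNReal.ofReal (Real.exp (-(4*σ^2)⁻¹ * Sf ω)) ∂P
      = ENNReal.ofReal (Real.sqrt (1 + τ^2/(2*σ^2)))⁻¹ ^ d := by
    calc ∫⁻ ω, ENNReal.ofReal (Real.exp (-(4*σ^2)⁻¹ * Sf ω)) ∂P
        = ∫⁻ ω, G (A ω, (B ω, C ω)) ∂P := by simp_rw [hg]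
      _ = ∫⁻ y, G y ∂(Measure.map (fun ω => (A ω, (B ω, C ω))) P) :=
          (lintegral_map hGmeas (hA.prodMk (hB.prodMk hC))).symm
      _ = ENNReal.ofReal (Real.sqrt (1 + τ^2/(2*σ^2)))⁻¹ ^ d := by
          rw [hmapT, lintegral_prod _ hGmeas.aemeasurable]
          have innerC : ∀ (a b : Fin d → ℝ),
              ∫⁻ c, G (a, (b, c)) ∂(Measure.pi fun _ : Fin d => gaussianReal 0 (σ ^ 2).toNNReal)
              = ∏ i, ENNReal.ofReal (Real.exp (-(8*σ^2)⁻¹ * (a i - b i)^2)) := by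
            intro a b
            rw [hGdef]
            rw [lintegral_pi_prod (fun _ => gaussianReal 0 (σ^2).toNNReal)
              (f := fun i z => ENNReal.ofReal (Real.exp (-(4*σ^2)⁻¹ *
                ((a i - b i)^2 + 2*(a i - b i)*z))))
              (fun i => Measurable.ennreal_ofReal (by fun_prop))]
            exact Finset.prod_congr rfl fun i _ => step_c hσ (a i - b i)
          have innerB : ∀ a : Fin d → ℝ,
              ∫⁻ b, ∏ i, ENNReal.ofReal (Real.exp (-(8*σ^2)⁻¹ * (a i - b i)^2))
                ∂(Measure.pi fun _ : Fin d => gaussianReal 0 (τ ^ 2).toNNReal)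
              = ∏ i, ENNReal.ofReal (Real.exp (-((8*σ^2)⁻¹/(1+τ^2/(4*σ^2))) * (a i)^2)
                  / Real.sqrt (1+τ^2/(4*σ^2))) := by
            intro a
            rw [lintegral_pi_prod (fun _ => gaussianReal 0 (τ^2).toNNReal)
              (f := fun i z => ENNReal.ofReal (Real.exp (-(8*σ^2)⁻¹ * (a i - z)^2)))
              (fun i => Measurable.ennreal_ofReal (by fun_prop))]
            exact Finset.prod_congr rfl fun i _ => step_b hτ hσ (a i)
          have innerA : ∫⁻ a : Fin d → ℝ,
              ∏ i, ENNReal.ofReal (Real.exp (-((8*σ^2)⁻¹/(1+τ^2/(4*σ^2))) * (a i)^2)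
                  / Real.sqrt (1+τ^2/(4*σ^2)))
                ∂(Measure.pi fun _ : Fin d => gaussianReal 0 (τ ^ 2).toNNReal)
              = ENNReal.ofReal (Real.sqrt (1 + τ^2/(2*σ^2)))⁻¹ ^ d := by
            rw [lintegral_pi_prod (fun _ => gaussianReal 0 (τ^2).toNNReal)
              (f := fun i z => ENNReal.ofReal (Real.exp (-((8*σ^2)⁻¹/(1+τ^2/(4*σ^2))) * z^2)
                  / Real.sqrt (1+τ^2/(4*σ^2))))
              (fun i => Measurable.ennreal_ofReal (by fun_prop))]
            rw [Finset.prod_congr rfl fun (i : Fin d) _ => step_a hτ hσ]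
            rw [Finset.prod_const, Finset.card_univ, Fintype.card_fin]
          have hz : ∀ a : Fin d → ℝ,
              ∫⁻ z, G (a, z)
                ∂((Measure.pi fun _ : Fin d => gaussianReal 0 (τ ^ 2).toNNReal).prod
                  (Measure.pi fun _ : Fin d => gaussianReal 0 (σ ^ 2).toNNReal))
              = ∏ i, ENNReal.ofReal (Real.exp (-((8*σ^2)⁻¹/(1+τ^2/(4*σ^2))) * (a i)^2)
                  / Real.sqrt (1+τ^2/(4*σ^2))) := by
            intro a
            rw [lintegral_prod (fun z => G (a, z)) ((hGmeas.comp measurable_prodMk_left).aemeasurable : AEMeasurable (fun z => G (a, z)) _)]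
            calc ∫⁻ b, ∫⁻ c, G (a, (b, c))
                  ∂(Measure.pi fun _ : Fin d => gaussianReal 0 (σ ^ 2).toNNReal)
                  ∂(Measure.pi fun _ : Fin d => gaussianReal 0 (τ ^ 2).toNNReal)
                = ∫⁻ b, ∏ i, ENNReal.ofReal (Real.exp (-(8*σ^2)⁻¹ * (a i - b i)^2))
                  ∂(Measure.pi fun _ : Fin d => gaussianReal 0 (τ ^ 2).toNNReal) :=
                  lintegral_congr fun b => innerC a b
              _ = _ := innerB a
          rw [lintegral_congr hz, innerA]
  -- integrability of the exponential moment
  have hexpmeas : Measurable (fun ω => Real.exp (-(4*σ^2)⁻¹ * Sf ω)) :=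
    Real.measurable_exp.comp (hSfmeas.const_mul _)
  have h_int : Integrable (fun ω => Real.exp (-(4*σ^2)⁻¹ * Sf ω)) P := by
    constructor
    · exact hexpmeas.aestronglyMeasurable
    · rw [hasFiniteIntegral_iff_ofReal (ae_of_all _ fun ω => (Real.exp_pos _).le), key]
      exact ENNReal.pow_lt_top ENNReal.ofReal_lt_top
  have hmgf : mgf Sf P (-(4*σ^2)⁻¹) = ((Real.sqrt (1 + τ^2/(2*σ^2)))⁻¹)^d := by
    rw [mgf, integral_eq_lintegral_of_nonneg_ae (ae_of_all _ fun ω => (Real.exp_pos _).le)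
      hexpmeas.aestronglyMeasurable, key, ENNReal.toReal_pow,
      ENNReal.toReal_ofReal (by positivity)]
  -- identify the event
  have hset : {ω | ∑ i, (x ω i - μW ω i) ^ 2 ≤ ∑ i, (x ω i - μT ω i) ^ 2}
      = {ω | (∑ i, ((μT ω i - μW ω i)^2 + 2*(μT ω i - μW ω i)*(ξ ω i))) ≤ 0} := by
    ext ω
    simp only [Set.mem_setOf_eq]
    have hdiff : (∑ i, (x ω i - μW ω i)^2) - (∑ i, (x ω i - μT ω i)^2)
        = ∑ i, ((μT ω i - μW ω i)^2 + 2*(μT ω i - μW ω i)*(ξ ω i)) := by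
      rw [← Finset.sum_sub_distrib]
      exact Finset.sum_congr rfl fun i _ => by rw [hx]; ring
    rw [← sub_nonpos, hdiff]
  have hsetae : {ω | (∑ i, ((μT ω i - μW ω i)^2 + 2*(μT ω i - μW ω i)*(ξ ω i))) ≤ 0}
      =ᵐ[P] {ω | Sf ω ≤ 0} := by
    filter_upwards [haeA, haeB, haeC] with ω h1 h2 h3
    have hS : (∑ i, ((μT ω i - μW ω i)^2 + 2*(μT ω i - μW ω i)*(ξ ω i))) = Sf ω := by
      simp only [hSfdef, h1, h2, h3]
    exact congrArg (fun y : ℝ => y ≤ 0) hS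
  have hcher := measure_le_le_exp_mul_mgf (X := Sf) (μ := P) 0
    (t := -(4*σ^2)⁻¹) (neg_nonpos.2 (by positivity)) h_int
  calc (P {ω | ∑ i, (x ω i - μW ω i) ^ 2 ≤ ∑ i, (x ω i - μT ω i) ^ 2}).toReal
      = (P {ω | Sf ω ≤ 0}).toReal := by rw [hset, measure_congr hsetae]
    _ ≤ Real.exp (-(-(4*σ^2)⁻¹) * 0) * mgf Sf P (-(4*σ^2)⁻¹) := hcher
    _ = ((Real.sqrt (1 + τ^2/(2*σ^2)))⁻¹)^d := by
        rw [mul_zero, Real.exp_zero, one_mul, hmgf]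
    _ ≤ ε₀ := final_num d τ σ ε₀ hτ hσ hε₀ hd
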